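/- Let S be an ω₁-tree in which every node has uncountably many nodes above it and no uncountable chains. Then there is no uncountable T ⊆ S with the property that for every countable A ⊆ T there is a finite F ⊆ S such that every element of A lies below some element of F. -/
import Mathlib

/-- Two elements below a common node in a tree are comparable. -/
theorem cmp_below {S : Type} [PartialOrder S]
    (htree : ∀ t a b : S, a < t → b < t → a ≤ b ∨ b ≤ a)
    {f a b : S} (ha : a ≤ f) (hb : b ≤ f) : a ≤ b ∨ b ≤ a := by
  rcases ha.lt_or_eq with ha' | rfl
  · rcases hb.lt_or_eq with hb' | rfl
    · exact htree f a b ha' hb'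
    · exact Or.inl ha
  · exact Or.inr hb

/-- From an uncountable set one can extract a point and an uncountable subset all of
whose elements are incomparable with that point. -/
theorem step_lemma {S : Type} [PartialOrder S]
    (htree : ∀ t a b : S, a < t → b < t → a ≤ b ∨ b ≤ a)
    (hchain : ∀ C : Set S, (∀ a ∈ C, ∀ b ∈ C, a ≤ b ∨ b ≤ a) → C.Countable)
    {U : Set S} (hU : ¬ U.Countable) :
    ∃ b ∈ U, ∃ W, W ⊆ U ∧ ¬ W.Countable ∧ ∀ v ∈ W, ¬ v ≤ b ∧ ¬ b ≤ v := by
  have hnc : ¬ ∀ a ∈ U, ∀ b ∈ U, a ≤ b ∨ b ≤ a := fun h => hU (hchain U h)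
  push_neg at hnc
  obtain ⟨a, haU, b, hbU, hab, hba⟩ := hnc
  by_cases hcase : ({t ∈ U | ¬ (t ≤ a ∨ a ≤ t)} : Set S).Countable
  · have hchA : ({t : S | t ≤ a}).Countable :=
      hchain _ (fun x hx y hy => cmp_below htree hx hy)
    have hgt : ¬ ({t ∈ U | a < t} : Set S).Countable := by
      intro hc
      apply hU
      have hsub : U ⊆ {t : S | t ≤ a} ∪ {t ∈ U | a < t} ∪ {t ∈ U | ¬ (t ≤ a ∨ a ≤ t)} := by
        intro t ht
        by_cases h1 : t ≤ a ∨ a ≤ t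
        · rcases h1 with h1 | h1
          · exact Or.inl (Or.inl h1)
          · rcases h1.lt_or_eq with h2 | rfl
            · exact Or.inl (Or.inr ⟨ht, h2⟩)
            · exact Or.inl (Or.inl le_rfl)
        · exact Or.inr ⟨ht, h1⟩
      exact Set.Countable.mono hsub ((hchA.union hc).union hcase)
    refine ⟨b, hbU, {t ∈ U | a < t}, fun t ht => ht.1, hgt, ?_⟩
    rintro v ⟨hvU, hav⟩
    constructor
    · intro hvb; exact hab (lt_of_lt_of_le hav hvb).le
    · intro hbv
      rcases hbv.lt_or_eq with h | rfl
      · rcases htree v a b hav h with h' | h'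
        · exact hab h'
        · exact hba h'
      · exact hab hav.le
  · exact ⟨a, haU, _, fun t ht => ht.1, hcase,
      fun v hv => ⟨fun h => hv.2 (Or.inl h), fun h => hv.2 (Or.inr h)⟩⟩

/-- Let `S` be an `ω₁`-tree (a well-founded partial order of cardinality
`ℵ₁` whose predecessor sets are chains) with no uncountable chains, in which every node
has uncountably many nodes above it. Then there is no uncountable `T ⊆ S` such that
every countable `A ⊆ T` is covered from above by a finite `F ⊆ S`. -/
theorem no_uncountable_finitely_covered_subset (S : Type) [PartialOrder S]
    (hcard : Cardinal.mk S = Cardinal.aleph 1) (hwf : WellFoundedLT S)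
    (htree : ∀ t a b : S, a < t → b < t → a ≤ b ∨ b ≤ a)
    (hchain : ∀ C : Set S, (∀ a ∈ C, ∀ b ∈ C, a ≤ b ∨ b ≤ a) → C.Countable)
    (habove : ∀ s : S, ¬ {t : S | s ≤ t}.Countable) :
    ¬ ∃ T : Set S, ¬ T.Countable ∧
      ∀ A ⊆ T, A.Countable → ∃ F : Finset S, ∀ a ∈ A, ∃ f ∈ F, a ≤ f := by
  classical
  rintro ⟨T, hT, hcov⟩
  -- extraction function on uncountable sets
  obtain ⟨g, hg⟩ : ∃ g : {V : Set S // ¬ V.Countable} → S × {V : Set S // ¬ V.Countable},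
      ∀ V, (g V).1 ∈ V.1 ∧ (g V).2.1 ⊆ V.1 ∧
        ∀ v ∈ (g V).2.1, ¬ v ≤ (g V).1 ∧ ¬ (g V).1 ≤ v := by
    choose b hb W hWsub hWc hinc using
      fun V : {V : Set S // ¬ V.Countable} => step_lemma htree hchain V.2
    exact ⟨fun V => (b V, ⟨W V, hWc V⟩), fun V => ⟨hb V, hWsub V, hinc V⟩⟩
  -- recursively shrink
  let seq : ℕ → {V : Set S // ¬ V.Countable} :=
    fun n => Nat.rec ⟨T, hT⟩ (fun _ V => (g V).2) n
  let a : ℕ → S := fun n => (g (seq n)).1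
  have hseq_succ : ∀ n, seq (n + 1) = (g (seq n)).2 := fun n => rfl
  have hmem : ∀ n, a n ∈ (seq n).1 := fun n => (hg (seq n)).1
  have hsub : ∀ n, (seq (n + 1)).1 ⊆ (seq n).1 := fun n => (hg (seq n)).2.1
  have hmono : ∀ n m : ℕ, n ≤ m → (seq m).1 ⊆ (seq n).1 := by
    intro n m hnm
    induction hnm with
    | refl => exact fun x hx => hx
    | step _ ih => exact fun x hx => ih (hsub _ hx)
  have hsubT : ∀ n, (seq n).1 ⊆ T := fun n => hmono 0 n (Nat.zero_le n)
  have haT : ∀ n, a n ∈ T := fun n => hsubT n (hmem n)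
  -- pairwise incomparability
  have hincomp : ∀ n m : ℕ, n < m → ¬ a m ≤ a n ∧ ¬ a n ≤ a m := by
    intro n m hnm
    have h1 : a m ∈ (seq (n + 1)).1 := hmono (n + 1) m hnm (hmem m)
    have := (hg (seq n)).2.2 (a m) (by rw [← hseq_succ n] at *; exact h1)
    exact this
  -- the antichain is a countable subset of T
  have hrange : Set.range a ⊆ T := by rintro _ ⟨n, rfl⟩; exact haT n
  obtain ⟨F, hF⟩ := hcov (Set.range a) hrange (Set.countable_range a)
  choose f hfF hfle using fun n => hF (a n) ⟨n, rfl⟩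
  -- pigeonhole
  obtain ⟨n, m, hnm, heq⟩ : ∃ n m : ℕ, n ≠ m ∧ f n = f m := by
    obtain ⟨n, m, hnm, heq⟩ :=
      Finite.exists_ne_map_eq_of_infinite (fun n : ℕ => (⟨f n, hfF n⟩ : F))
    exact ⟨n, m, hnm, congrArg Subtype.val heq⟩
  have hcmp : a n ≤ a m ∨ a m ≤ a n :=
    cmp_below htree (heq ▸ hfle n) (hfle m)
  rcases Nat.lt_or_ge n m with h | h
  · rcases hcmp with h' | h'
    · exact (hincomp n m h).2 h'
    · exact (hincomp n m h).1 h'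
  · have h2 : m < n := lt_of_le_of_ne h (fun e => hnm e.symm)
    rcases hcmp with h' | h'
    · exact (hincomp m n h2).1 h'
    · exact (hincomp m n h2).2 h'
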